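/- If E ⊆ 𝔸ⁿ(k) is a constructible Kakeya subset (k algebraically closed), then dim E = n, i.e. the Zariski closure of E is all of 𝔸ⁿ. -/

import Mathlib

/-- A subset `E ⊆ 𝔸ⁿ(k) = kⁿ` is a Kakeya subset if for every nonzero direction `v`
there is a point `p` such that the line `{p + t • v : t ∈ k}` is contained in `E`. -/
def IsKakeya {k : Type*} [Field k] {n : ℕ} (E : Set (Fin n → k)) : Prop :=
  ∀ v : Fin n → k, v ≠ 0 → ∃ p : Fin n → k, ∀ t : k, p + t • v ∈ E

/-- A subset of `kⁿ` is Zariski closed if it is the zero locus of an ideal of polynomials. -/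
def IsZarClosed {k : Type*} [Field k] {n : ℕ} (S : Set (Fin n → k)) : Prop :=
  ∃ I : Ideal (MvPolynomial (Fin n) k), S = MvPolynomial.zeroLocus k I

/-- A subset of `kⁿ` is constructible if it is a finite union of locally closed subsets,
i.e. of differences of Zariski closed subsets. -/
def IsConstructibleSet {k : Type*} [Field k] {n : ℕ} (S : Set (Fin n → k)) : Prop :=
  ∃ (m : ℕ) (C D : Fin m → Set (Fin n → k)),
    (∀ i, IsZarClosed (C i)) ∧ (∀ i, IsZarClosed (D i)) ∧ S = ⋃ i, (C i \ D i)

namespace KakeyaAux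


open Polynomial MvPolynomial

variable {k : Type*} [CommRing k] {n : ℕ}

lemma coeff_prod_of_natDegree_le' {ι : Type*} (s : Finset ι) (g : ι → k[X]) (m : ι → ℕ)
    (h : ∀ i ∈ s, (g i).natDegree ≤ m i) :
    (∏ i ∈ s, g i).coeff (∑ i ∈ s, m i) = ∏ i ∈ s, (g i).coeff (m i) := by
  classical
  induction s using Finset.cons_induction with
  | empty => simp
  | cons a s ha ih =>
    rw [Finset.prod_cons, Finset.prod_cons, Finset.sum_cons,
      Polynomial.coeff_mul_add_eq_of_natDegree_le (h a (Finset.mem_cons_self a s))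
        ((Polynomial.natDegree_prod_le _ _).trans
          (Finset.sum_le_sum fun i hi => h i (Finset.mem_cons_of_mem hi))),
      ih fun i hi => h i (Finset.mem_cons_of_mem hi)]

lemma coeff_aeval_line_monomial (p v : Fin n → k) (d : Fin n →₀ ℕ) (c : k) {N : ℕ}
    (hN : d.degree ≤ N) :
    ((MvPolynomial.aeval fun i => Polynomial.C (p i) + Polynomial.C (v i) * Polynomial.X)
        (MvPolynomial.monomial d c)).coeff N
      = MvPolynomial.eval v (MvPolynomial.homogeneousComponent N (MvPolynomial.monomial d c)) := by
  classical
  have hdeg1 : ∀ i : Fin n, (Polynomial.C (p i) + Polynomial.C (v i) * Polynomial.X).natDegree ≤ 1 := by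
    intro i
    refine (Polynomial.natDegree_add_le _ _).trans ?_
    simp only [Polynomial.natDegree_C, Nat.zero_le, max_le_iff, true_and]
    exact (Polynomial.natDegree_mul_le).trans (by simp [Polynomial.natDegree_X_le])
  have hpow : ∀ i : Fin n, ((Polynomial.C (p i) + Polynomial.C (v i) * Polynomial.X) ^ d i).natDegree ≤ d i := by
    intro i
    refine Polynomial.natDegree_pow_le.trans ?_
    calc d i * (Polynomial.C (p i) + Polynomial.C (v i) * Polynomial.X).natDegree
        ≤ d i * 1 := Nat.mul_le_mul_left _ (hdeg1 i)
      _ = d i := Nat.mul_one _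
  rw [MvPolynomial.aeval_monomial]
  rcases eq_or_lt_of_le hN with heq | hlt
  · -- top degree case
    have hhom : MvPolynomial.homogeneousComponent N (MvPolynomial.monomial d c)
        = MvPolynomial.monomial d c := by
      rw [MvPolynomial.homogeneousComponent_of_mem
        ((MvPolynomial.mem_homogeneousSubmodule _ _).mpr
          (MvPolynomial.isHomogeneous_monomial c heq)), if_pos rfl]
    rw [hhom, MvPolynomial.eval_monomial]
    have hsum : N = ∑ i ∈ d.support, d i := by rw [← heq]; rfl
    rw [hsum]
    simp only [Polynomial.algebraMap_eq, Finsupp.prod]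
    rw [Polynomial.coeff_C_mul, coeff_prod_of_natDegree_le' _ _ _ fun i _ => hpow i]
    congr 1
    refine Finset.prod_congr rfl fun i _ => ?_
    have := Polynomial.coeff_pow_of_natDegree_le (n := 1) (m := d i) (hdeg1 i)
    rw [Nat.mul_one] at this
    rw [this]
    simp
  · -- low degree case: both sides vanish
    have hbound : ((algebraMap k k[X]) c *
        d.prod fun i e => (Polynomial.C (p i) + Polynomial.C (v i) * Polynomial.X) ^ e).natDegree
        < N := by
      refine lt_of_le_of_lt (Polynomial.natDegree_mul_le.trans ?_) hlt
      simp only [Polynomial.algebraMap_eq, Polynomial.natDegree_C, Nat.zero_add, Finsupp.prod]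
      refine (Polynomial.natDegree_prod_le _ _).trans ?_
      exact Finset.sum_le_sum fun i _ => hpow i
    rw [Polynomial.coeff_eq_zero_of_natDegree_lt hbound,
      MvPolynomial.homogeneousComponent_eq_zero _ _
        (lt_of_le_of_lt (MvPolynomial.totalDegree_monomial_le d c) hlt)]
    simp

lemma coeff_aeval_line (p v : Fin n → k) (f : MvPolynomial (Fin n) k) {N : ℕ}
    (hN : f.totalDegree ≤ N) :
    ((MvPolynomial.aeval fun i => Polynomial.C (p i) + Polynomial.C (v i) * Polynomial.X)
        f).coeff N = MvPolynomial.eval v (MvPolynomial.homogeneousComponent N f) := by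
  classical
  conv_lhs => rw [f.as_sum]
  conv_rhs => rw [f.as_sum]
  rw [map_sum, map_sum, map_sum, Polynomial.finset_sum_coeff]
  refine Finset.sum_congr rfl fun d hd => ?_
  exact coeff_aeval_line_monomial p v d _ ((MvPolynomial.le_totalDegree hd).trans hN)

lemma eval_line (p v : Fin n → k) (f : MvPolynomial (Fin n) k) (t : k) :
    Polynomial.eval t ((MvPolynomial.aeval fun i =>
        Polynomial.C (p i) + Polynomial.C (v i) * Polynomial.X) f)
      = MvPolynomial.eval (fun i => p i + t * v i) f := by
  induction f using MvPolynomial.induction_on with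
  | C a => simp
  | add f g hf hg => simp [hf, hg]
  | mul_X f i hf => simp [hf, mul_comm t]

lemma homogeneousComponent_totalDegree_ne_zero (f : MvPolynomial (Fin n) k) (hf : f ≠ 0) :
    MvPolynomial.homogeneousComponent f.totalDegree f ≠ 0 := by
  classical
  obtain ⟨d, hd, hdeg⟩ := Finset.exists_mem_eq_sup f.support
    (MvPolynomial.support_nonempty.mpr hf) fun s => s.sum fun _ e => e
  intro h0
  have : MvPolynomial.coeff d (MvPolynomial.homogeneousComponent f.totalDegree f)
      = MvPolynomial.coeff d f := by
    rw [MvPolynomial.coeff_homogeneousComponent, if_pos]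
    rw [MvPolynomial.totalDegree, hdeg]; rfl
  rw [h0, MvPolynomial.coeff_zero] at this
  exact (MvPolynomial.mem_support_iff.mp hd) this.symm


end KakeyaAux

/-- If `E ⊆ 𝔸ⁿ(k)` is a constructible Kakeya subset (`k` algebraically closed), then
`dim E = n`, i.e. the Zariski closure of `E` is all of `𝔸ⁿ`. -/
theorem kakeya_constructible_dense {k : Type*} [Field k] [IsAlgClosed k] {n : ℕ} (hn : 1 ≤ n)
    (E : Set (Fin n → k)) (hE : IsConstructibleSet E) (hK : IsKakeya E) :
    MvPolynomial.zeroLocus k (MvPolynomial.vanishingIdeal k E) = Set.univ := by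
  have hK' := hK
  unfold IsKakeya at hK'
  revert hK'
  intro hK
  classical
  have hbot : MvPolynomial.vanishingIdeal k E = ⊥ := by
    rw [eq_bot_iff]
    intro f hf
    rw [MvPolynomial.mem_vanishingIdeal_iff] at hf
    rw [Ideal.mem_bot]
    by_contra hf0
    have hFne := KakeyaAux.homogeneousComponent_totalDegree_ne_zero f hf0
    set d := f.totalDegree with hd
    set F := MvPolynomial.homogeneousComponent d f with hF
    -- E is nonempty
    have i0 : Fin n := ⟨0, hn⟩
    have hvne : (Pi.single i0 1 : Fin n → k) ≠ 0 := by
      intro h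
      have := congrFun h i0
      simp at this
    obtain ⟨p0, hp0⟩ := hK _ hvne
    have hEx : p0 ∈ E := by simpa using hp0 0
    -- the total degree is positive
    have hd1 : 1 ≤ d := by
      by_contra hlt
      push_neg at hlt
      have hd0 : d = 0 := Nat.lt_one_iff.mp hlt
      have hfeq : f = F := by
        conv_lhs => rw [← MvPolynomial.sum_homogeneousComponent f]
        rw [← hd, hd0]
        simp [hF, hd0]
      have : F = MvPolynomial.C (MvPolynomial.coeff 0 f) := by
        rw [hF, hd0, MvPolynomial.homogeneousComponent_zero]
      rw [hfeq, this] at hf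
      have hc0 : MvPolynomial.coeff 0 f = 0 := by
        have := hf p0 hEx
        simpa using this
      apply hf0
      rw [hfeq, this, hc0, map_zero]
    -- the top homogeneous component vanishes everywhere
    have hall : ∀ v : Fin n → k, MvPolynomial.eval v F = 0 := by
      intro v
      by_cases hv : v = 0
      · subst hv
        rw [MvPolynomial.eval_zero, MvPolynomial.constantCoeff_eq, hF,
          MvPolynomial.coeff_homogeneousComponent, if_neg]
        intro h0
        rw [map_zero] at h0
        omega
      · obtain ⟨p, hp⟩ := hK v hv
        have hg : ((MvPolynomial.aeval fun i =>
            Polynomial.C (p i) + Polynomial.C (v i) * Polynomial.X) f) = 0 := by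
          apply Polynomial.zero_of_eval_zero
          intro t
          rw [KakeyaAux.eval_line]
          have hmem : (fun i => p i + t * v i) = p + t • v := by
            funext i; simp
          rw [hmem]
          exact hf _ (hp t)
        have := KakeyaAux.coeff_aeval_line p v f (le_refl d)
        rw [hg, Polynomial.coeff_zero] at this
        exact this.symm
    exact hFne (MvPolynomial.funext fun x => by rw [hall x, map_zero])
  rw [hbot, MvPolynomial.zeroLocus_bot]
  rfl
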